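/- If F is a nontrivial union-closed family of dimension at most one, then every element of U_F is abundant in F; moreover every x ∈ U_F belongs to all but at most one member of F. -/
import Mathlib


/-- If `F` is a nontrivial union-closed family of dimension at most one
(no strict 3-chain), then every element of `U_F` is abundant in `F`, and
every `x ∈ U_F` belongs to all but at most one member of `F`. -/
theorem stmt_9 {α : Type*} (F : Set (Set α))
    (hne : F.Nonempty) (hU : (⋃₀ F).Nonempty)
    (hUC : ∀ A ∈ F, ∀ B ∈ F, A ∪ B ∈ F)
    (hdim : ∀ A ∈ F, ∀ B ∈ F, ∀ C ∈ F, A ⊂ B → B ⊂ C → False) :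
    ∀ x ∈ ⋃₀ F,
      (∃ f : {A : Set α // A ∈ F ∧ x ∉ A} → {A : Set α // A ∈ F ∧ x ∈ A},
        Function.Injective f) ∧
      {A ∈ F | x ∉ A}.Subsingleton := by
  intro x hx
  obtain ⟨C, hC, hxC⟩ := hx
  have hsub : {A ∈ F | x ∉ A}.Subsingleton := by
    rintro A ⟨hA, hxA⟩ B ⟨hB, hxB⟩
    by_contra hne'
    -- A ∪ B ∈ F, doesn't contain x
    have hAB := hUC A hA B hB
    have hABC := hUC (A ∪ B) hAB C hC
    -- if A ≠ A ∪ B then A ⊂ A∪B ⊂ A∪B∪C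
    have h1 : A = A ∪ B := by
      by_contra h
      exact hdim A hA (A ∪ B) hAB (A ∪ B ∪ C) hABC
        ⟨Set.subset_union_left, fun hs => h (le_antisymm Set.subset_union_left hs)⟩
        ⟨Set.subset_union_left, fun hs => (hxA (Or.elim (hs (Or.inr hxC)) id (fun h => absurd h hxB)) : False)⟩
    have h2 : B = A ∪ B := by
      by_contra h
      exact hdim B hB (A ∪ B) hAB (A ∪ B ∪ C) hABC
        ⟨Set.subset_union_right, fun hs => h (le_antisymm Set.subset_union_right hs)⟩
        ⟨Set.subset_union_left, fun hs => (hxA (Or.elim (hs (Or.inr hxC)) id (fun h => absurd h hxB)) : False)⟩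
    exact hne' (h1.trans h2.symm)
  refine ⟨⟨fun _ => ⟨C, hC, hxC⟩, fun a b _ => ?_⟩, hsub⟩
  exact Subtype.ext (hsub ⟨a.2.1, a.2.2⟩ ⟨b.2.1, b.2.2⟩)
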